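/- Let n be a positive integer dividing p - 1, and let ν be a positive integer coprime to p with s_p(ν) = n. Then ν is p-symmetric: there exist positive integers w, k, ℓ with ℓ < p^k, ν·w = (p^k - 1)·ℓ, and s_p(ν·w) = s_p(ν)·s_p(w). Concretely, one may take w = ((p-1)/n)·(1 + p + ... + p^{k-1}) for suitable k. -/

import Mathlib

/-- Sum of the base-`p` digits of `n`. -/
def digitSum (p n : ℕ) : ℕ := (Nat.digits p n).sum

/-- An integer `ν > 1` coprime to `p` is `p`-symmetric if there exist positive
integers `w`, `k`, `ℓ` with `ℓ < p^k` such that `ν * w = (p^k - 1) * ℓ` and the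
base-`p` product `ν * w` is carry-free, i.e. `s_p(ν*w) = s_p(ν) * s_p(w)`. -/
def IsPSymmetric (p ν : ℕ) : Prop :=
  1 < ν ∧ Nat.Coprime ν p ∧
    ∃ w k ℓ : ℕ, 0 < w ∧ 0 < k ∧ 0 < ℓ ∧ ℓ < p ^ k ∧
      ν * w = (p ^ k - 1) * ℓ ∧
      digitSum p (ν * w) = digitSum p ν * digitSum p w

lemma digitSum_step (p x r : ℕ) (hp : 1 < p) (hr : r < p) :
    digitSum p (p * x + r) = r + digitSum p x := by
  rcases Nat.eq_zero_or_pos (p * x + r) with h | h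
  · have hr0 : r = 0 := by omega
    have hx0 : x = 0 := by
      rcases Nat.mul_eq_zero.mp (by omega : p * x = 0) with h' | h' <;> omega
    simp [hr0, hx0, digitSum]
  · rw [digitSum, Nat.digits_def' hp h]
    have h1 : (p * x + r) % p = r := by
      rw [Nat.mul_add_mod, Nat.mod_eq_of_lt hr]
    have h2 : (p * x + r) / p = x := by
      rw [Nat.mul_add_div (by omega), Nat.div_eq_of_lt hr, Nat.add_zero]
    rw [h1, h2, List.sum_cons]
    rfl

lemma digitSum_compl (p : ℕ) (hp : 1 < p) :
    ∀ k a, a < p ^ k → digitSum p a + digitSum p (p ^ k - 1 - a) = k * (p - 1) := by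
  intro k
  induction k with
  | zero =>
    intro a ha
    simp only [pow_zero] at ha
    interval_cases a
    simp [digitSum]
  | succ k ih =>
    intro a ha
    have hppos : 0 < p := by omega
    have hq : a / p < p ^ k := by
      apply Nat.div_lt_of_lt_mul
      rw [← pow_succ']
      exact ha
    have hr : a % p < p := Nat.mod_lt _ hppos
    have hPk : 0 < p ^ k := Nat.pow_pos hppos
    have hda : p * (a / p) + a % p = a := Nat.div_add_mod a p
    have e1 : p ^ (k + 1) = p * p ^ k := by rw [pow_succ, mul_comm]
    have e2 : p * (p ^ k - 1 - a / p) = p * p ^ k - (p + p * (a / p)) := by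
      rw [show p ^ k - 1 - a / p = p ^ k - (1 + a / p) from by omega, Nat.mul_sub,
        Nat.mul_add, Nat.mul_one]
    have hle : p + p * (a / p) ≤ p * p ^ k := by
      have h' : p * (1 + a / p) ≤ p * p ^ k := Nat.mul_le_mul_left p (by omega)
      rw [Nat.mul_add, Nat.mul_one] at h'
      exact h'
    have hkey : p ^ (k + 1) - 1 - a = p * (p ^ k - 1 - a / p) + (p - 1 - a % p) := by
      rw [e1, e2]
      omega
    calc digitSum p a + digitSum p (p ^ (k + 1) - 1 - a)
        = digitSum p (p * (a / p) + a % p)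
            + digitSum p (p * (p ^ k - 1 - a / p) + (p - 1 - a % p)) := by
          rw [hda, hkey]
      _ = (a % p + digitSum p (a / p))
            + ((p - 1 - a % p) + digitSum p (p ^ k - 1 - a / p)) := by
          rw [digitSum_step p _ _ hp hr, digitSum_step p _ _ hp (by omega)]
      _ = (k + 1) * (p - 1) := by
          have hih := ih (a / p) hq
          have hrr : a % p + (p - 1 - a % p) = p - 1 := by omega
          have hkk : (k + 1) * (p - 1) = k * (p - 1) + (p - 1) := by ring
          omega

lemma digitSum_split (p : ℕ) (hp : 1 < p) :
    ∀ k b c, c < p ^ k →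
      digitSum p (c + p ^ k * b) = digitSum p c + digitSum p b := by
  intro k
  induction k with
  | zero =>
    intro b c hc
    simp only [pow_zero] at hc
    interval_cases c
    simp [digitSum]
  | succ k ih =>
    intro b c hc
    have hppos : 0 < p := by omega
    have hcd : c / p < p ^ k := by
      apply Nat.div_lt_of_lt_mul
      rw [← pow_succ']
      exact hc
    have hdc : p * (c / p) + c % p = c := Nat.div_add_mod c p
    have hdecomp : c + p ^ (k + 1) * b = p * (c / p + p ^ k * b) + c % p := by
      rw [Nat.mul_add, ← mul_assoc, ← pow_succ']
      omega
    rw [hdecomp, digitSum_step p _ _ hp (Nat.mod_lt _ hppos), ih b _ hcd]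
    have hc' : digitSum p c = c % p + digitSum p (c / p) := by
      conv_lhs => rw [← hdc]
      rw [digitSum_step p _ _ hp (Nat.mod_lt _ hppos)]
    omega

lemma geom_nat (p : ℕ) (hp : 1 ≤ p) :
    ∀ k, (p - 1) * ∑ i ∈ Finset.range k, p ^ i = p ^ k - 1 := by
  intro k
  induction k with
  | zero => simp
  | succ k ih =>
    rw [Finset.sum_range_succ, Nat.mul_add, ih, Nat.sub_mul, one_mul, pow_succ]
    have h1 : 1 ≤ p ^ k := Nat.one_le_pow _ _ (by omega)
    have h2 : p ^ k ≤ p * p ^ k := Nat.le_mul_of_pos_left _ (by omega)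
    rw [mul_comm (p ^ k) p]
    omega

lemma digitSum_rep (p m : ℕ) (hp : 1 < p) (hm : m < p) :
    ∀ k, digitSum p (m * ∑ i ∈ Finset.range k, p ^ i) = k * m := by
  intro k
  induction k with
  | zero => simp [digitSum]
  | succ k ih =>
    have hsum : ∑ i ∈ Finset.range (k + 1), p ^ i
        = p * ∑ i ∈ Finset.range k, p ^ i + 1 := by
      rw [Finset.sum_range_succ']
      simp [Finset.mul_sum, pow_succ, mul_comm]
    rw [hsum, Nat.mul_add, Nat.mul_one, mul_left_comm m p,
      digitSum_step p _ _ hp hm, ih]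
    ring

theorem pSymmetric_of_digitSum_dvd (p n ν : ℕ) (hp : p.Prime)
    (hn : 0 < n) (hdvd : n ∣ p - 1)
    (hν : 0 < ν) (hco : Nat.Coprime ν p) (hs : digitSum p ν = n) :
    ∃ k ℓ : ℕ, 0 < k ∧ 0 < ℓ ∧ ℓ < p ^ k ∧
      ν * (((p - 1) / n) * ∑ i ∈ Finset.range k, p ^ i) = (p ^ k - 1) * ℓ ∧
      digitSum p (ν * (((p - 1) / n) * ∑ i ∈ Finset.range k, p ^ i)) =
        digitSum p ν * digitSum p (((p - 1) / n) * ∑ i ∈ Finset.range k, p ^ i) := by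
  have hp1 : 1 < p := hp.one_lt
  set m := (p - 1) / n with hm
  have hmn : m * n = p - 1 := Nat.div_mul_cancel hdvd
  have hmdvd : m ∣ p - 1 := ⟨n, hmn.symm⟩
  have hmle : m ≤ p - 1 := Nat.le_of_dvd (by omega) hmdvd
  have hm1 : 0 < m := by
    rcases Nat.eq_zero_or_pos m with h | h
    · rw [h, Nat.zero_mul] at hmn; omega
    · exact h
  have hmp : m < p := by omega
  -- key divisibility : (p-1) ∣ ν * m
  have hdv : (p - 1) ∣ ν * m := by
    rcases eq_or_lt_of_le (by omega : 2 ≤ p) with h2 | h2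
    · rw [← h2]; simp
    · have hpm : p % (p - 1) = 1 := by
        have h' := Nat.add_mod_left (p - 1) 1
        rw [show p - 1 + 1 = p from by omega] at h'
        rw [h', Nat.mod_eq_of_lt (by omega)]
      have h1 : ν ≡ (Nat.digits p ν).sum [MOD p - 1] := Nat.modEq_digits_sum (p - 1) p hpm ν
      have h1' : ν ≡ n [MOD p - 1] := by rwa [show (Nat.digits p ν).sum = n from hs] at h1
      have h2' : ν * m ≡ n * m [MOD p - 1] := h1'.mul_right m
      have h3 : n * m = p - 1 := by rw [mul_comm]; exact hmn
      have h4 : ν * m ≡ 0 [MOD p - 1] := by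
        calc ν * m ≡ n * m [MOD p - 1] := h2'
          _ = p - 1 := h3
          _ ≡ 0 [MOD p - 1] := Nat.modEq_zero_iff_dvd.mpr dvd_rfl
      exact Nat.modEq_zero_iff_dvd.mp h4
  set ℓ := ν * m / (p - 1) with hℓdef
  have hℓeq : (p - 1) * ℓ = ν * m := Nat.mul_div_cancel' hdv
  have hℓpos : 0 < ℓ :=
    Nat.div_pos (Nat.le_of_dvd (Nat.mul_pos hν hm1) hdv) (by omega)
  have hℓleν : ℓ ≤ ν := by
    have h1 : (p - 1) * ℓ ≤ (p - 1) * ν := by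
      rw [hℓeq]
      calc ν * m ≤ ν * (p - 1) := Nat.mul_le_mul_left ν hmle
        _ = (p - 1) * ν := mul_comm _ _
    exact Nat.le_of_mul_le_mul_left h1 (by omega)
  have hνlt : ν < p ^ ν := Nat.lt_pow_self hp1
  have hℓlt : ℓ < p ^ ν := lt_of_le_of_lt hℓleν hνlt
  have hgeom : (p - 1) * ∑ i ∈ Finset.range ν, p ^ i = p ^ ν - 1 :=
    geom_nat p (by omega) ν
  have hPν : 0 < p ^ ν := Nat.pow_pos (by omega)
  have heq : ν * (m * ∑ i ∈ Finset.range ν, p ^ i) = (p ^ ν - 1) * ℓ := by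
    calc ν * (m * ∑ i ∈ Finset.range ν, p ^ i)
        = (ν * m) * ∑ i ∈ Finset.range ν, p ^ i := by ring
      _ = ((p - 1) * ℓ) * ∑ i ∈ Finset.range ν, p ^ i := by rw [hℓeq]
      _ = ((p - 1) * ∑ i ∈ Finset.range ν, p ^ i) * ℓ := by ring
      _ = (p ^ ν - 1) * ℓ := by rw [hgeom]
  refine ⟨ν, ℓ, hν, hℓpos, hℓlt, heq, ?_⟩
  -- digit sum equality
  have hdecomp : (p ^ ν - 1) * ℓ = (p ^ ν - ℓ) + p ^ ν * (ℓ - 1) := by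
    have h1 : ℓ ≤ p ^ ν * ℓ := Nat.le_mul_of_pos_left _ hPν
    have h2 : p ^ ν ≤ p ^ ν * ℓ := Nat.le_mul_of_pos_right _ hℓpos
    rw [Nat.sub_mul, Nat.mul_sub, one_mul, Nat.mul_one]
    omega
  have hsub_lt : p ^ ν - ℓ < p ^ ν := Nat.sub_lt hPν hℓpos
  have hcompl := digitSum_compl p hp1 ν (ℓ - 1) (by omega)
  have hrewr : p ^ ν - 1 - (ℓ - 1) = p ^ ν - ℓ := by omega
  rw [hrewr] at hcompl
  have hLHS : digitSum p ((p ^ ν - 1) * ℓ) = ν * (p - 1) := by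
    rw [hdecomp, digitSum_split p hp1 ν (ℓ - 1) (p ^ ν - ℓ) hsub_lt]
    omega
  rw [heq, hLHS, hs, digitSum_rep p m hp1 hmp ν]
  calc ν * (p - 1) = ν * (n * m) := by rw [mul_comm n m, hmn]
    _ = n * (ν * m) := by ring
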